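/- Fix 0 < β < 1 and define α_n := Σ_{j=1}^n j^{-β} for n ≥ 1. Then α is strictly increasing with α_n → ∞, lim_{n→∞} (log n)/α_n = 0, and for every 0 < r < 1 one has lim_{n→∞} (r^{α_n}/n) · Σ_{m=1}^n r^{-α_m} = 0. -/

import Mathlib

open Filter Finset Topology

noncomputable section

private lemma npos (n : ℕ) : (0:ℝ) < (n:ℝ) + 1 := by positivity

/-- for `0 < β < 1` and `α_n = ∑_{j=1}^n j^{-β}`, the sequence `α` is
strictly increasing with `α_n → ∞`, `(log n)/α_n → 0`, and for every `0 < r < 1` one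
has `(r^{α_n}/n) ∑_{m=1}^n r^{-α_m} → 0`.  (Indices shifted: `n : Nat` is `n+1`.) -/
theorem stmt3 (b : ℝ) (hb0 : 0 < b) (hb1 : b < 1) (a : ℕ → ℝ)
    (ha : ∀ n : ℕ, a n = ∑ j ∈ Finset.range (n + 1), ((j : ℝ) + 1) ^ (-b)) :
    StrictMono a ∧ Tendsto a atTop atTop ∧
    Tendsto (fun n : ℕ => Real.log ((n : ℝ) + 1) / a n) atTop (𝓝 0) ∧
    ∀ r : ℝ, 0 < r → r < 1 →
      Tendsto
        (fun n : ℕ => r ^ (a n) / ((n : ℝ) + 1) * ∑ m ∈ Finset.range (n + 1), r ^ (-(a m)))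
        atTop (𝓝 0) := by
  -- basic lower bound : a n ≥ (n+1)^(1-b)
  have hlb : ∀ n : ℕ, ((n:ℝ) + 1) ^ (1 - b) ≤ a n := by
    intro n
    have h1 : ((n:ℝ) + 1) ^ (1 - b) = ((n:ℝ)+1) * ((n:ℝ)+1) ^ (-b) := by
      rw [show (1:ℝ) - b = 1 + (-b) by ring, Real.rpow_add (npos n), Real.rpow_one]
    rw [ha n, h1]
    have : ((n:ℝ)+1) * ((n:ℝ)+1)^(-b) = ∑ j ∈ Finset.range (n+1), ((n:ℝ)+1)^(-b) := by
      rw [Finset.sum_const, Finset.card_range, nsmul_eq_mul]; push_cast; ring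
    rw [this]
    apply Finset.sum_le_sum
    intro j hj
    apply Real.rpow_le_rpow_of_nonpos (npos j) _ (by linarith)
    have : (j:ℝ) ≤ (n:ℝ) := by
      exact_mod_cast Nat.lt_succ_iff.mp (Finset.mem_range.mp hj)
    linarith
  have hpos : ∀ n : ℕ, 0 < a n := fun n =>
    lt_of_lt_of_le (Real.rpow_pos_of_pos (npos n) _) (hlb n)
  -- strict mono
  have hsm : StrictMono a := by
    apply strictMono_nat_of_lt_succ
    intro n
    rw [ha n, ha (n+1), Finset.sum_range_succ _ (n+1)]
    have : (0:ℝ) < ((n+1:ℕ) + 1:ℝ) ^ (-b) := Real.rpow_pos_of_pos (npos (n+1)) _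
    linarith
  -- tendsto atTop
  have htop : Tendsto a atTop atTop := by
    apply tendsto_atTop_mono hlb
    apply Tendsto.comp (tendsto_rpow_atTop (by linarith : (0:ℝ) < 1 - b))
    exact tendsto_atTop_add_const_right atTop 1 tendsto_natCast_atTop_atTop
  refine ⟨hsm, htop, ?_, ?_⟩
  · -- log / a n → 0
    have h0 : Tendsto (fun x : ℝ => Real.log x / x ^ (1 - b)) atTop (𝓝 0) :=
      (isLittleO_log_rpow_atTop (by linarith : (0:ℝ) < 1 - b)).tendsto_div_nhds_zero
    have h1 : Tendsto (fun n : ℕ => Real.log ((n:ℝ)+1) / ((n:ℝ)+1) ^ (1 - b)) atTop (𝓝 0) :=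
      h0.comp (tendsto_atTop_add_const_right atTop 1 tendsto_natCast_atTop_atTop)
    apply squeeze_zero (fun n => div_nonneg (Real.log_nonneg (by linarith [Nat.cast_nonneg (α := ℝ) n])) (hpos n).le) _ h1
    intro n
    apply div_le_div_of_nonneg_left _ (Real.rpow_pos_of_pos (npos n) _) (hlb n)
    · exact Real.log_nonneg (by linarith [Nat.cast_nonneg (α := ℝ) n])
  · -- main part
    intro r hr0 hr1
    set L : ℝ := -Real.log r with hL
    have hLpos : 0 < L := by
      rw [hL]
      exact neg_pos.mpr (Real.log_neg hr0 hr1)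
    -- bound: f n ≤ (n+1)^(b-1) / (L * r)
    have key : ∀ n : ℕ,
        r ^ (a n) / ((n:ℝ) + 1) * ∑ m ∈ Finset.range (n + 1), r ^ (-(a m))
          ≤ ((n:ℝ)+1) ^ (b-1) / (L * r) := by
      intro n
      set ε : ℝ := ((n:ℝ)+1) ^ (-b) with hε
      have hεpos : 0 < ε := Real.rpow_pos_of_pos (npos n) _
      have hεle1 : ε ≤ 1 :=
        Real.rpow_le_one_of_one_le_of_nonpos (by linarith [Nat.cast_nonneg (α := ℝ) n])
          (by linarith)
      set x : ℝ := r ^ ε with hx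
      have hx0 : 0 < x := Real.rpow_pos_of_pos hr0 _
      have hx1 : x < 1 := Real.rpow_lt_one hr0.le hr1 hεpos
      -- step 1 : r^(a n) * ∑ r^(-a m) ≤ ∑ x^(n-m)
      have step1 : r ^ (a n) * ∑ m ∈ Finset.range (n + 1), r ^ (-(a m))
          ≤ ∑ m ∈ Finset.range (n + 1), x ^ (n - m) := by
        rw [Finset.mul_sum]
        apply Finset.sum_le_sum
        intro m hm
        have hmn : m ≤ n := Nat.lt_succ_iff.mp (Finset.mem_range.mp hm)
        rw [← Real.rpow_add hr0]
        have hdiff : ((n - m : ℕ) : ℝ) * ε ≤ a n + -(a m) := by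
          rw [ha n, ha m, ← sub_eq_add_neg, ← Finset.sum_Ico_eq_sub _ (by omega)]
          have hcard : ((n - m : ℕ):ℝ) * ε = ∑ _j ∈ Finset.Ico (m+1) (n+1), ε := by
            rw [Finset.sum_const, nsmul_eq_mul, Nat.card_Ico,
              show n + 1 - (m+1) = n - m from by omega]
          rw [hcard]
          apply Finset.sum_le_sum
          intro j hj
          apply Real.rpow_le_rpow_of_nonpos (npos j) _ (by linarith)
          have : (j:ℝ) ≤ (n:ℝ) := by
            exact_mod_cast Nat.lt_succ_iff.mp (Finset.mem_Ico.mp hj).2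
          linarith
        calc r ^ (a n + -(a m)) ≤ r ^ (((n - m : ℕ):ℝ) * ε) :=
              Real.rpow_le_rpow_of_exponent_ge hr0 hr1.le hdiff
          _ = x ^ (n - m) := by
              rw [hx, ← Real.rpow_natCast (r ^ ε) (n - m), ← Real.rpow_mul hr0.le]
              ring_nf
      -- step 2 : geometric sum bound
      have step2 : ∑ m ∈ Finset.range (n + 1), x ^ (n - m) ≤ 1 / (1 - x) := by
        have hre : ∑ m ∈ Finset.range (n + 1), x ^ (n - m)
            = ∑ m ∈ Finset.range (n + 1), x ^ m := by
          rw [← Finset.sum_range_reflect]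
          apply Finset.sum_congr rfl
          intro m hm
          simp only [Finset.mem_range] at hm
          congr 1
          omega
        rw [hre, geom_sum_eq hx1.ne,
          show (x ^ (n+1) - 1)/(x - 1) = (1 - x ^ (n+1))/(1 - x) from by
            rw [div_eq_div_iff (by linarith) (by linarith)]; ring]
        have hp : (0:ℝ) ≤ x ^ (n+1) := by positivity
        exact (div_le_div_iff_of_pos_right (by linarith)).mpr (by linarith)
      -- step 3 : 1 - x ≥ ε * L * r
      have step3 : ε * L * r ≤ 1 - x := by
        have hxe : x = Real.exp (-(ε * L)) := by
          rw [hx, Real.rpow_def_of_pos hr0]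
          congr 1
          rw [hL]; ring
        have h1 : ε * L ≤ Real.exp (ε * L) - 1 := by
          linarith [Real.add_one_le_exp (ε * L)]
        have h2 : r ≤ Real.exp (-(ε * L)) := by
          rw [show r = Real.exp (-L) by rw [hL, neg_neg, Real.exp_log hr0]]
          apply Real.exp_le_exp.mpr
          have : ε * L ≤ L := by nlinarith
          linarith
        have h3 : 1 - x = Real.exp (-(ε * L)) * (Real.exp (ε * L) - 1) := by
          rw [hxe, mul_sub, ← Real.exp_add, mul_one]
          simp
        rw [h3]
        have he0 : 0 ≤ Real.exp (-(ε * L)) := (Real.exp_pos _).le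
        calc ε * L * r ≤ ε * L * Real.exp (-(ε * L)) := by
              apply mul_le_mul_of_nonneg_left h2; positivity
          _ = Real.exp (-(ε * L)) * (ε * L) := by ring
          _ ≤ Real.exp (-(ε * L)) * (Real.exp (ε * L) - 1) := by
              apply mul_le_mul_of_nonneg_left h1 he0
      have hεLr : 0 < ε * L * r := by positivity
      have h1x : 0 < 1 - x := by linarith
      have step4 : (1:ℝ) / (1 - x) ≤ 1 / (ε * L * r) :=
        one_div_le_one_div_of_le hεLr step3
      have hsum0 : 0 ≤ ∑ m ∈ Finset.range (n + 1), r ^ (-(a m)) :=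
        Finset.sum_nonneg fun m _ => (Real.rpow_pos_of_pos hr0 _).le
      have hran : 0 ≤ r ^ (a n) := (Real.rpow_pos_of_pos hr0 _).le
      have chain : r ^ (a n) * ∑ m ∈ Finset.range (n + 1), r ^ (-(a m)) ≤ 1 / (ε * L * r) :=
        le_trans (le_trans step1 step2) step4
      have e4 : ε * ((n:ℝ)+1) = ((n:ℝ)+1) ^ (1-b) := by
        rw [hε, show (1:ℝ)-b = -b+1 by ring, Real.rpow_add (npos n), Real.rpow_one]
      have e5 : ((n:ℝ)+1) ^ (b-1) = (((n:ℝ)+1) ^ (1-b))⁻¹ := by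
        rw [← Real.rpow_neg (npos n).le, neg_sub]
      have hεne := hεpos.ne'
      have hLne := hLpos.ne'
      have hrne := hr0.ne'
      have hnne := (npos n).ne'
      have hfinal : ((n:ℝ)+1) ^ (b-1) / (L * r) = (1 / (ε * L * r)) / ((n:ℝ)+1) := by
        rw [e5, ← e4]
        field_simp
      rw [div_mul_eq_mul_div, div_le_iff₀ (npos n), hfinal, div_mul_cancel₀ _ (npos n).ne']
      exact chain
    -- squeeze
    have hnn : ∀ n : ℕ, 0 ≤ r ^ (a n) / ((n:ℝ) + 1) * ∑ m ∈ Finset.range (n + 1), r ^ (-(a m)) := by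
      intro n
      apply mul_nonneg
      · positivity
      · exact Finset.sum_nonneg fun m _ => (Real.rpow_pos_of_pos hr0 _).le
    have hA : Tendsto (fun n : ℕ => ((n:ℝ)+1) ^ (b-1) / (L * r)) atTop (𝓝 0) := by
      have h0 : Tendsto (fun x : ℝ => x ^ (b-1)) atTop (𝓝 0) :=
        by
          have := tendsto_rpow_neg_atTop (by linarith : (0:ℝ) < 1 - b)
          simpa [show -(1-b) = b - 1 from by ring] using this
      have h1 : Tendsto (fun n : ℕ => ((n:ℝ)+1) ^ (b-1)) atTop (𝓝 0) :=
        h0.comp (tendsto_atTop_add_const_right atTop 1 tendsto_natCast_atTop_atTop)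
      simpa using h1.div_const (L * r)
    exact squeeze_zero hnn key hA
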